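/- The operator T : c₀ ⇉ ℓ¹ with graph {(−G(y), y) : y ∈ ℓ¹, G(y) ∈ c₀} is monotone: for any (x, y), (x', y') in its graph, ⟨x − x', y − y'⟩ ≥ 0 (indeed = 0). -/

import Mathlib

open Filter Topology

/-- The Gossez operator, with sequences indexed from `0`:
entry `n` (paper index `n+1`) is `∑_{i ≥ n+1} y i − ∑_{i ≤ n-1} y i`. -/
noncomputable def G (y : ℕ → ℝ) (n : ℕ) : ℝ :=
  (∑' i : ℕ, y (n + 1 + i)) - ∑ i ∈ Finset.range n, y i

lemma G_sub (y y' : ℕ → ℝ) (hy : Summable y) (hy' : Summable y') (n : ℕ) :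
    G (fun i => y i - y' i) n = G y n - G y' n := by
  have h1 : Summable fun i => y (n + 1 + i) := by
    simpa [add_comm] using (summable_nat_add_iff (n + 1)).2 hy
  have h2 : Summable fun i => y' (n + 1 + i) := by
    simpa [add_comm] using (summable_nat_add_iff (n + 1)).2 hy'
  simp only [G, Summable.tsum_sub h1 h2, Finset.sum_sub_distrib]
  ring

lemma G_eq (z : ℕ → ℝ) (hz : Summable z) (n : ℕ) :
    G z n = (∑' i, z i) - (∑ i ∈ Finset.range (n + 1), z i) - ∑ i ∈ Finset.range n, z i := by
  have := Summable.sum_add_tsum_nat_add (n + 1) hz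
  have h : (∑' i, z (n + 1 + i)) = (∑' i, z i) - ∑ i ∈ Finset.range (n + 1), z i := by
    rw [← this]; simp [add_comm]
  simp [G, h]

/-- The operator with graph `{(-G y, y) : y ∈ l1, G y ∈ c₀}` is monotone
(indeed the duality pairing vanishes). -/
theorem T_monotone (y y' : ℕ → ℝ)
    (hy : Summable fun i => |y i|) (hy' : Summable fun i => |y' i|)
    (hcy : Tendsto (G y) atTop (𝓝 0)) (hcy' : Tendsto (G y') atTop (𝓝 0)) :
    ∑' n, ((-G y n) - (-G y' n)) * (y n - y' n) = 0 := by
  have hys : Summable y := summable_abs_iff.mp hy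
  have hy's : Summable y' := summable_abs_iff.mp hy'
  set z : ℕ → ℝ := fun i => y i - y' i with hzdef
  have hz : Summable z := hys.sub hy's
  set S : ℝ := ∑' i, z i with hS
  set T : ℕ → ℝ := fun n => ∑ i ∈ Finset.range n, z i with hT
  have hGz : ∀ n, G z n = S - T (n + 1) - T n := fun n => G_eq z hz n
  -- the summand equals -(G z n * z n)
  have hsummand : ∀ n, ((-G y n) - (-G y' n)) * (y n - y' n) = -(G z n * z n) := by
    intro n
    rw [G_sub y y' hys hy's n]
    ring
  -- G z tends to 0, hence bounded
  have hGz0 : Tendsto (G z) atTop (𝓝 0) := by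
    have h : Tendsto (fun n => G y n - G y' n) atTop (𝓝 (0 - 0)) := hcy.sub hcy'
    have he : G z = fun n => G y n - G y' n := funext (G_sub y y' hys hy's)
    rw [he]; simpa using h
  obtain ⟨C, hC⟩ : ∃ C, ∀ n, |G z n| ≤ C := by
    have := hGz0.abs.bddAbove_range
    obtain ⟨C, hC⟩ := this
    exact ⟨C, fun n => hC ⟨n, rfl⟩⟩
  -- summability of f n = G z n * z n
  have hf : Summable (fun n => G z n * z n) := by
    apply Summable.of_abs
    apply Summable.of_nonneg_of_le (fun n => abs_nonneg _) (fun n => ?_)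
      ((summable_abs_iff.mpr hz).mul_left C)
    rw [abs_mul]
    exact mul_le_mul_of_nonneg_right (hC n) (abs_nonneg _)
  -- partial sums telescope
  have hzn : ∀ n, z n = T (n + 1) - T n := by
    intro n; simp [hT, Finset.sum_range_succ]
  have htel : ∀ N, ∑ n ∈ Finset.range N, G z n * z n = S * T N - T N ^ 2 := by
    intro N
    induction N with
    | zero => simp [hT]
    | succ N ih =>
      rw [Finset.sum_range_succ, ih, hGz N, hzn N]
      ring
  have hTlim : Tendsto T atTop (𝓝 S) := hz.hasSum.tendsto_sum_nat
  have hlim : Tendsto (fun N => ∑ n ∈ Finset.range N, G z n * z n) atTop (𝓝 0) := by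
    have : Tendsto (fun N => S * T N - T N ^ 2) atTop (𝓝 (S * S - S ^ 2)) :=
      (hTlim.const_mul S).sub (hTlim.pow 2)
    have h0 : S * S - S ^ 2 = 0 := by ring
    rw [h0] at this
    simpa only [htel] using this
  have hsum0 : ∑' n, G z n * z n = 0 :=
    tendsto_nhds_unique hf.hasSum.tendsto_sum_nat hlim
  calc ∑' n, ((-G y n) - (-G y' n)) * (y n - y' n)
      = ∑' n, -(G z n * z n) := by exact tsum_congr hsummand
    _ = -(∑' n, G z n * z n) := by rw [tsum_neg]
    _ = 0 := by rw [hsum0]; ring
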